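/- Let λ = (λ_1,…,λ_r) be a partition of n with r parts, and set α = (λ_2,…,λ_r). Then the distribution of the major index over standard Young tableaux of shape λ with the maximum possible number n−λ_1 of descents satisfies f_{λ,n−λ_1}(q) = q^{binom(n−λ_1+1, 2)}·s_{α'}(1, q, q², …, q^{λ_1−1}), where α' is the conjugate partition of α and s_{α'} is the Schur polynomial indexed by α' evaluated at the λ_1 arguments 1, q, …, q^{λ_1−1}. -/

import Mathlib

open Polynomial
open scoped Classical

noncomputable section

/-- The set of cells of the skew shape `outer \ inner`, where `outer` and `inner` are
lists of row lengths (rows and columns are 0-indexed): the cell `(r, c)` is present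
iff `inner.getD r 0 ≤ c < outer.getD r 0`. -/
def skewCells (outer inner : List ℕ) : Finset (ℕ × ℕ) :=
  ((Finset.range outer.length) ×ˢ (Finset.range (outer.foldr max 0))).filter
    (fun p => inner.getD p.1 0 ≤ p.2 ∧ p.2 < outer.getD p.1 0)

/-- `pos` encodes a standard Young tableau of skew shape `outer \ inner`:
`pos k` is the cell containing the entry `k + 1`.  The conditions say that the
entries are a bijective filling which increases left to right along rows and
top to bottom down columns. -/
def IsSYT (outer inner : List ℕ)
    (pos : Fin (skewCells outer inner).card → ↥(skewCells outer inner)) : Prop :=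
  Function.Injective pos ∧
  (∀ a b, ((pos a : ℕ × ℕ)).1 = ((pos b : ℕ × ℕ)).1 →
      ((pos a : ℕ × ℕ)).2 < ((pos b : ℕ × ℕ)).2 → a < b) ∧
  (∀ a b, ((pos a : ℕ × ℕ)).2 = ((pos b : ℕ × ℕ)).2 →
      ((pos a : ℕ × ℕ)).1 < ((pos b : ℕ × ℕ)).1 → a < b)

/-- The finite set of standard Young tableaux of skew shape `outer \ inner`. -/
def SYTs (outer inner : List ℕ) :
    Finset (Fin (skewCells outer inner).card → ↥(skewCells outer inner)) :=
  Finset.univ.filter (IsSYT outer inner)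

/-- The descent set of the tableau `pos`: the values `v` such that `v + 1` lies in a
strictly lower row than `v` (entry `v` is at index `v - 1`, entry `v+1` at index `v`). -/
def desSet (outer inner : List ℕ)
    (pos : Fin (skewCells outer inner).card → ↥(skewCells outer inner)) : Finset ℕ :=
  (Finset.range (skewCells outer inner).card).filter
    (fun v => ∃ a b : Fin (skewCells outer inner).card,
      (a : ℕ) + 1 = v ∧ (b : ℕ) = v ∧ ((pos a : ℕ × ℕ)).1 < ((pos b : ℕ × ℕ)).1)

/-- The major index of a tableau: the sum of its descents. -/
def majStat (outer inner : List ℕ)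
    (pos : Fin (skewCells outer inner).card → ↥(skewCells outer inner)) : ℕ :=
  (desSet outer inner pos).sum id

/-- The number of descents of a tableau. -/
def desStat (outer inner : List ℕ)
    (pos : Fin (skewCells outer inner).card → ↥(skewCells outer inner)) : ℕ :=
  (desSet outer inner pos).card

/-- `f_{outer∖inner, i}(q) = Σ_{τ ∈ SYT(outer∖inner), des(τ) = i} q^{maj(τ)} ∈ ℤ[q]`. -/
def fSkew (outer inner : List ℕ) (i : ℕ) : Polynomial ℤ :=
  ∑ pos ∈ (SYTs outer inner).filter (fun pos => desStat outer inner pos = i),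
    X ^ majStat outer inner pos

/-- `f_{λ, i}(q)` for a straight (non-skew) shape `λ`. -/
def fPoly (lam : List ℕ) (i : ℕ) : Polynomial ℤ := fSkew lam [] i

/-- Gaussian binomial coefficients for natural arguments, via the q-Pascal recurrence
`[M+1, N+1]_q = [M, N+1]_q + q^(M-N) [M, N]_q`, with `[M, 0]_q = 1`, `[0, N+1]_q = 0`. -/
def qBinomAux : ℕ → ℕ → Polynomial ℤ
  | _, 0 => 1
  | 0, _ + 1 => 0
  | M + 1, N + 1 => qBinomAux M (N + 1) + X ^ (M - N) * qBinomAux M N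

/-- Gaussian binomial coefficient `[M choose N]_q ∈ ℤ[q]`, with the convention that
it is `0` unless `0 ≤ N ≤ M`. -/
def qBinom (M N : ℤ) : Polynomial ℤ :=
  if 0 ≤ N ∧ N ≤ M then qBinomAux M.toNat N.toNat else 0

/-- The conjugate partition of `μ` (as a list of row lengths): part `j` (0-indexed)
is the number of parts of `μ` exceeding `j`. -/
def conj (mu : List ℕ) : List ℕ :=
  (List.range (mu.headD 0)).map (fun j => (mu.filter (fun x => j < x)).length)

/-- The principal specialization `s_μ(1, q, q², …, q^{m-1})` of the Schur polynomial:
the sum over semistandard Young tableaux of shape `μ` with entries in `{1,…,m}`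
(here 0-indexed as `Fin m`, an entry `e` contributing weight `q^e`, i.e. `x_i = q^{i-1}`)
of `q^{Σ_cells (entry - 1)}`.  Rows weakly increase and columns strictly increase. -/
def schurSpec (mu : List ℕ) (m : ℕ) : Polynomial ℤ :=
  ∑ T ∈ Finset.univ.filter
      (fun T : (↥(skewCells mu []) → Fin m) =>
        (∀ p q : ↥(skewCells mu []), ((p : ℕ × ℕ)).1 = ((q : ℕ × ℕ)).1 →
            ((p : ℕ × ℕ)).2 ≤ ((q : ℕ × ℕ)).2 → T p ≤ T q) ∧
        (∀ p q : ↥(skewCells mu []), ((p : ℕ × ℕ)).2 = ((q : ℕ × ℕ)).2 →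
            ((p : ℕ × ℕ)).1 < ((q : ℕ × ℕ)).1 → T p < T q)),
    X ^ (∑ p : ↥(skewCells mu []), ((T p : ℕ)))

section Basic

lemma getD_le_foldr_max (l : List ℕ) (i : ℕ) : l.getD i 0 ≤ l.foldr max 0 := by
  induction l generalizing i with
  | nil => simp
  | cons a t ih =>
    cases i with
    | zero => simp [List.getD]
    | succ i => simpa using le_trans (ih i) (le_max_right _ _)

lemma getD_anti {l : List ℕ} (h : l.Pairwise (· ≥ ·)) {i j : ℕ} (hij : i ≤ j) :
    l.getD j 0 ≤ l.getD i 0 := by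
  by_cases hj : j < l.length
  · have hi : i < l.length := lt_of_le_of_lt hij hj
    rw [List.getD_eq_getElem _ _ hj, List.getD_eq_getElem _ _ hi]
    rcases eq_or_lt_of_le hij with rfl | hlt
    · exact le_refl _
    · exact List.pairwise_iff_get.mp h ⟨i, hi⟩ ⟨j, hj⟩ hlt
  · rw [List.getD_eq_default _ _ (le_of_not_gt hj)]; exact Nat.zero_le _

lemma mem_skewCells {outer : List ℕ} {p : ℕ × ℕ} :
    p ∈ skewCells outer [] ↔ p.1 < outer.length ∧ p.2 < outer.getD p.1 0 := by
  simp only [skewCells, Finset.mem_filter, Finset.mem_product, Finset.mem_range]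
  constructor
  · rintro ⟨⟨h1, _⟩, _, h3⟩; exact ⟨h1, h3⟩
  · rintro ⟨h1, h2⟩
    exact ⟨⟨h1, lt_of_lt_of_le h2 (getD_le_foldr_max _ _)⟩, by simp, h2⟩

lemma sum_getD_range (l : List ℕ) : ∑ i ∈ Finset.range l.length, l.getD i 0 = l.sum := by
  induction l with
  | nil => simp
  | cons a t ih =>
    rw [List.length_cons, Finset.sum_range_succ']
    simp only [List.getD_cons_succ, List.getD_cons_zero, List.sum_cons, ih]
    ring

lemma card_skewCells (outer : List ℕ) : (skewCells outer []).card = outer.sum := by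
  rw [← sum_getD_range]
  rw [Finset.card_eq_sum_card_fiberwise (f := Prod.fst) (t := Finset.range outer.length)
    (fun p hp => Finset.mem_range.mpr (mem_skewCells.mp hp).1)]
  refine Finset.sum_congr rfl fun i hi => ?_
  have : (skewCells outer []).filter (fun p => p.1 = i) =
      (Finset.range (outer.getD i 0)).image (fun j => (i, j)) := by
    ext ⟨x, y⟩
    simp only [Finset.mem_filter, mem_skewCells, Finset.mem_image, Finset.mem_range]
    constructor
    · rintro ⟨⟨h1, h2⟩, rfl⟩; exact ⟨y, h2, rfl⟩
    · rintro ⟨j, hj, h⟩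
      obtain ⟨rfl, rfl⟩ := Prod.mk.injEq .. ▸ h
      exact ⟨⟨Finset.mem_range.mp hi, hj⟩, rfl⟩
  rw [this, Finset.card_image_of_injective _ (fun x y h => (Prod.mk.injEq .. ▸ h).2),
    Finset.card_range]

lemma filter_length_sorted {l : List ℕ} (h : l.Pairwise (· ≥ ·)) (j i : ℕ) :
    i < (l.filter (fun x => j < x)).length ↔ i < l.length ∧ j < l.getD i 0 := by
  induction l generalizing i with
  | nil => simp
  | cons a t ih =>
    have ht : t.Pairwise (· ≥ ·) := h.of_cons
    by_cases hja : j < a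
    · rw [List.filter_cons_of_pos (by simpa using hja)]
      cases i with
      | zero => simp [hja]
      | succ i =>
        simp only [List.length_cons, Nat.succ_lt_succ_iff, List.getD_cons_succ]
        exact ih ht i
    · have hfil : (a :: t).filter (fun x => j < x) = [] := by
        rw [List.filter_eq_nil_iff]
        intro x hx
        rcases List.mem_cons.mp hx with rfl | hx
        · simpa using hja
        · have : x ≤ a := List.rel_of_pairwise_cons h hx
          simp only [decide_eq_true_eq]
          omega
      rw [hfil]
      simp only [List.length_nil, Nat.not_lt_zero, false_iff, not_and]
      intro hi
      have : (a :: t).getD i 0 ≤ a := by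
        have := getD_anti h (Nat.zero_le i)
        simpa using this
      omega

lemma mem_conj_cells {tl : List ℕ} (h : tl.Pairwise (· ≥ ·)) (j i : ℕ) :
    (j, i) ∈ skewCells (conj tl) [] ↔ i < tl.length ∧ j < tl.getD i 0 := by
  rw [mem_skewCells]
  simp only [conj, List.length_map, List.length_range]
  constructor
  · rintro ⟨hj, hi⟩
    rw [List.getD_eq_getElem _ _ (by simpa using hj)] at hi
    simp only [List.getElem_map, List.getElem_range] at hi
    exact (filter_length_sorted h j i).mp hi
  · rintro ⟨hi, hj⟩
    have hjhead : j < tl.headD 0 := by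
      have h0 : tl.getD i 0 ≤ tl.getD 0 0 := getD_anti h (Nat.zero_le i)
      have : tl.getD 0 0 = tl.headD 0 := by cases tl <;> simp
      omega
    refine ⟨hjhead, ?_⟩
    rw [List.getD_eq_getElem _ _ (by simpa using hjhead)]
    simp only [List.getElem_map, List.getElem_range]
    exact (filter_length_sorted h j i).mpr ⟨hi, hj⟩

end Basic
section Defs

variable (a : ℕ) (tl : List ℕ)

abbrev Cells : Finset (ℕ × ℕ) := skewCells (a :: tl) []
abbrev Cells' : Finset (ℕ × ℕ) := skewCells (conj tl) []
abbrev NN : ℕ := (Cells a tl).card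

variable {a tl}

/-- number of entries with index < t lying in row 0 -/
def cntN (pos : Fin (NN a tl) → ↥(Cells a tl)) (t : ℕ) : ℕ :=
  ((Finset.univ : Finset (Fin (NN a tl))).filter
    (fun b' : Fin (NN a tl) => (b' : ℕ) < t ∧ ((pos b' : ℕ × ℕ)).1 = 0)).card

/-- the index of the entry occupying the cell of `a::tl` corresponding to the
transposed cell `p` of `conj tl` -/
def bIndexNat (pos : Fin (NN a tl) → ↥(Cells a tl)) (p : ↥(Cells' tl)) : ℕ :=
  if h : ∃ b, ((pos b : ℕ × ℕ)).1 = (p : ℕ × ℕ).2 + 1 ∧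
      ((pos b : ℕ × ℕ)).2 = (p : ℕ × ℕ).1 then (Classical.choose h : Fin _).val else 0

/-- the forward map of the bijection: from max-descent SYT to SSYT -/
def Phi (ha : 0 < a) (pos : Fin (NN a tl) → ↥(Cells a tl)) (p : ↥(Cells' tl)) : Fin a :=
  ⟨(cntN pos (bIndexNat pos p) - 1) % a, Nat.mod_lt _ ha⟩

/-- the sorting key on cells of `a::tl` determined by an SSYT `T` on `conj tl` -/
def keyT (T : ↥(Cells' tl) → Fin a) (c : ↥(Cells a tl)) : ℕ :=
  if (c : ℕ × ℕ).1 = 0 then (c : ℕ × ℕ).2 * (tl.length + 1)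
  else if h : ((c : ℕ × ℕ).2, (c : ℕ × ℕ).1 - 1) ∈ Cells' tl then
    (T ⟨_, h⟩ : ℕ) * (tl.length + 1) + (c : ℕ × ℕ).1
  else 0

def anyCell (b : Fin (NN a tl)) : ↥(Cells a tl) :=
  haveI : Nonempty ↥(Cells a tl) :=
    (Finset.card_pos.mp b.pos).to_subtype
  Classical.arbitrary _

/-- the inverse map: from an SSYT `T` to the tableau enumerating cells by `keyT T` -/
def Psi (T : ↥(Cells' tl) → Fin a) (b : Fin (NN a tl)) : ↥(Cells a tl) :=
  if h : (Finset.univ.image (keyT T)).card = NN a tl then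
    if h2 : ∃ c : ↥(Cells a tl),
        keyT T c = ((Finset.univ.image (keyT T)).orderIsoOfFin h b : ℕ) then
      Classical.choose h2
    else anyCell b
  else anyCell b

end Defs

section PsiBasic

variable {a : ℕ} {tl : List ℕ} {T : ↥(Cells' tl) → Fin a}

lemma keyT_card (hinj : Function.Injective (keyT T)) :
    (Finset.univ.image (keyT T)).card = NN a tl := by
  rw [Finset.card_image_of_injective _ hinj, Finset.card_univ, Fintype.card_coe]

lemma psi_key (hinj : Function.Injective (keyT T)) (b : Fin (NN a tl)) :
    keyT T (Psi T b) =
      ((Finset.univ.image (keyT T)).orderIsoOfFin (keyT_card hinj) b : ℕ) := by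
  rw [Psi, dif_pos (keyT_card hinj)]
  have h2 : ∃ c : ↥(Cells a tl),
      keyT T c = ((Finset.univ.image (keyT T)).orderIsoOfFin (keyT_card hinj) b : ℕ) := by
    have := ((Finset.univ.image (keyT T)).orderIsoOfFin (keyT_card hinj) b).2
    rcases Finset.mem_image.mp this with ⟨c, _, hc⟩
    exact ⟨c, hc⟩
  rw [dif_pos h2]
  exact Classical.choose_spec h2

lemma psi_mono (hinj : Function.Injective (keyT T)) {b b' : Fin (NN a tl)} :
    b < b' ↔ keyT T (Psi T b) < keyT T (Psi T b') := by
  rw [psi_key hinj, psi_key hinj]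
  rw [Subtype.coe_lt_coe, OrderIso.lt_iff_lt]

lemma psi_surj (hinj : Function.Injective (keyT T)) : Function.Surjective (Psi T) := by
  intro c
  have hc : keyT T c ∈ Finset.univ.image (keyT T) := Finset.mem_image_of_mem _ (Finset.mem_univ c)
  obtain ⟨i, hi⟩ := ((Finset.univ.image (keyT T)).orderIsoOfFin (keyT_card hinj)).surjective
    ⟨keyT T c, hc⟩
  refine ⟨i, hinj ?_⟩
  rw [psi_key hinj, hi]

lemma psi_inj (hinj : Function.Injective (keyT T)) : Function.Injective (Psi T) := by
  intro b b' h
  by_contra hne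
  rcases lt_or_gt_of_ne hne with hlt | hlt
  · have := (psi_mono hinj).mp hlt; rw [h] at this; exact lt_irrefl _ this
  · have := (psi_mono hinj).mp hlt; rw [h] at this; exact lt_irrefl _ this

/-- uniqueness of a key-monotone enumeration -/
lemma pos_eq_of_keymono {f : ↥(Cells a tl) → ℕ} (hf : Function.Injective f)
    {pos pos' : Fin (NN a tl) → ↥(Cells a tl)}
    (s1 : Function.Surjective pos) (s2 : Function.Surjective pos')
    (m1 : StrictMono (f ∘ pos)) (m2 : StrictMono (f ∘ pos')) : pos = pos' := by
  have hr : Set.range (f ∘ pos) = Set.range (f ∘ pos') := by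
    rw [Set.range_comp, Set.range_comp, Set.range_eq_univ.mpr s1,
      Set.range_eq_univ.mpr s2]
  haveI : WellFoundedLT (Fin (NN a tl)) := Finite.to_wellFoundedLT
  have := (StrictMono.range_inj (f := f ∘ pos) (g := f ∘ pos') m1 m2).mp hr
  funext b
  exact hf (congrFun this b)

end PsiBasic
section SYTLemmas

variable {a : ℕ} {tl : List ℕ}

/-- indices of entries that are descent tops -/
def Dset (pos : Fin (NN a tl) → ↥(Cells a tl)) : Finset (Fin (NN a tl)) :=
  Finset.univ.filter (fun b => ∃ a' : Fin (NN a tl), (a' : ℕ) + 1 = (b : ℕ) ∧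
    ((pos a' : ℕ × ℕ)).1 < ((pos b : ℕ × ℕ)).1)

/-- indices of entries lying strictly below the first row -/
def Bset (pos : Fin (NN a tl) → ↥(Cells a tl)) : Finset (Fin (NN a tl)) :=
  Finset.univ.filter (fun b => 0 < ((pos b : ℕ × ℕ)).1)

variable {pos : Fin (NN a tl) → ↥(Cells a tl)}

lemma syt_bij (hS : IsSYT (a :: tl) [] pos) : Function.Bijective pos := by
  rw [Fintype.bijective_iff_injective_and_card]
  exact ⟨hS.1, by simp [Fintype.card_coe]⟩

lemma desSet_eq (pos : Fin (NN a tl) → ↥(Cells a tl)) :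
    desSet (a :: tl) [] pos = (Dset pos).image Fin.val := by
  ext v
  simp only [desSet, Dset, Finset.mem_filter, Finset.mem_range, Finset.mem_image,
    Finset.mem_univ, true_and]
  constructor
  · rintro ⟨hv, x, b, hx, rfl, hlt⟩
    exact ⟨b, ⟨x, hx, hlt⟩, rfl⟩
  · rintro ⟨b, ⟨x, hx, hlt⟩, rfl⟩
    exact ⟨b.isLt, x, b, hx, rfl, hlt⟩

lemma desStat_eq_card (pos : Fin (NN a tl) → ↥(Cells a tl)) :
    desStat (a :: tl) [] pos = (Dset pos).card := by
  rw [desStat, desSet_eq, Finset.card_image_of_injective _ Fin.val_injective]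

lemma majStat_eq_sum (pos : Fin (NN a tl) → ↥(Cells a tl)) :
    majStat (a :: tl) [] pos = ∑ b ∈ Dset pos, (b : ℕ) := by
  rw [majStat, desSet_eq, Finset.sum_image (fun x _ y _ h => Fin.val_injective h)]
  rfl

lemma Dset_subset (pos : Fin (NN a tl) → ↥(Cells a tl)) : Dset pos ⊆ Bset pos := by
  intro b hb
  simp only [Dset, Finset.mem_filter, Finset.mem_univ, true_and] at hb
  obtain ⟨x, _, hlt⟩ := hb
  simp only [Bset, Finset.mem_filter, Finset.mem_univ, true_and]
  omega

lemma row0_cells_eq : (Cells a tl).filter (fun p => p.1 = 0) =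
    (Finset.range a).image (fun j => (0, j)) := by
  ext ⟨x, y⟩
  simp only [Finset.mem_filter, mem_skewCells, Finset.mem_image, Finset.mem_range]
  constructor
  · rintro ⟨⟨_, h2⟩, rfl⟩
    refine ⟨y, ?_, rfl⟩
    simpa using h2
  · rintro ⟨j, hj, h⟩
    obtain ⟨rfl, rfl⟩ := Prod.mk.injEq .. ▸ h
    exact ⟨⟨by simp, by simpa using hj⟩, rfl⟩

lemma card_row0_cells : ((Cells a tl).filter (fun p => p.1 = 0)).card = a := by
  rw [row0_cells_eq, Finset.card_image_of_injective _ (fun x y h => (Prod.mk.injEq .. ▸ h).2),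
    Finset.card_range]

lemma card_pos_cells : ((Cells a tl).filter (fun p => 0 < p.1)).card = tl.sum := by
  have h := Finset.card_filter_add_card_filter_not
    (s := Cells a tl) (p := fun p => p.1 = 0)
  rw [card_row0_cells, card_skewCells] at h
  have : ((Cells a tl).filter (fun p => ¬ p.1 = 0)) = (Cells a tl).filter (fun p => 0 < p.1) := by
    apply Finset.filter_congr; intro p _; simp [Nat.pos_iff_ne_zero]
  rw [this] at h
  simp only [List.sum_cons] at h
  omega

lemma card_Bset (hS : IsSYT (a :: tl) [] pos) : (Bset pos).card = tl.sum := by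
  rw [← card_pos_cells (a := a) (tl := tl)]
  apply Finset.card_bij (fun b _ => (pos b : ℕ × ℕ))
  · intro b hb
    simp only [Bset, Finset.mem_filter, Finset.mem_univ, true_and] at hb
    exact Finset.mem_filter.mpr ⟨(pos b).2, hb⟩
  · intro b _ b' _ h
    exact hS.1 (Subtype.ext h)
  · intro c hc
    simp only [Finset.mem_filter] at hc
    obtain ⟨b, hb⟩ := (syt_bij hS).2 ⟨c, hc.1⟩
    refine ⟨b, ?_, by rw [hb]⟩
    simp only [Bset, Finset.mem_filter, Finset.mem_univ, true_and, hb]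
    exact hc.2

/-- the cell directly above an entry not in the first row holds a smaller entry -/
lemma cell_above (hs : (a :: tl).Pairwise (· ≥ ·)) (hS : IsSYT (a :: tl) [] pos)
    (b : Fin (NN a tl)) (hb : 0 < ((pos b : ℕ × ℕ)).1) :
    ∃ b' : Fin (NN a tl), b' < b ∧ ((pos b' : ℕ × ℕ)).1 + 1 = ((pos b : ℕ × ℕ)).1 ∧
      ((pos b' : ℕ × ℕ)).2 = ((pos b : ℕ × ℕ)).2 := by
  have hmem := (pos b).2
  rw [mem_skewCells] at hmem
  have habove : (((pos b : ℕ × ℕ)).1 - 1, ((pos b : ℕ × ℕ)).2) ∈ Cells a tl := by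
    rw [mem_skewCells]
    constructor
    · exact lt_trans (by omega) hmem.1
    · exact lt_of_lt_of_le hmem.2 (getD_anti hs (by omega))
  obtain ⟨b', hb'⟩ := (syt_bij hS).2 ⟨_, habove⟩
  have hrow : ((pos b' : ℕ × ℕ)).1 = ((pos b : ℕ × ℕ)).1 - 1 := by rw [hb']
  have hcol : ((pos b' : ℕ × ℕ)).2 = ((pos b : ℕ × ℕ)).2 := by rw [hb']
  refine ⟨b', ?_, by omega, hcol⟩
  exact hS.2.2 b' b hcol (by omega)

lemma exists_row0_lt (hs : (a :: tl).Pairwise (· ≥ ·)) (hS : IsSYT (a :: tl) [] pos) :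
    ∀ n : ℕ, ∀ b : Fin (NN a tl), (b : ℕ) < n → 0 < ((pos b : ℕ × ℕ)).1 →
      ∃ b' : Fin (NN a tl), b' < b ∧ ((pos b' : ℕ × ℕ)).1 = 0 := by
  intro n
  induction n with
  | zero => intro b hb; omega
  | succ n ih =>
    intro b hb hrow
    obtain ⟨b', hlt, hrow', _⟩ := cell_above hs hS b hrow
    by_cases h0 : ((pos b' : ℕ × ℕ)).1 = 0
    · exact ⟨b', hlt, h0⟩
    · obtain ⟨b'', h1, h2⟩ := ih b' (by omega) (by omega)
      exact ⟨b'', lt_trans h1 hlt, h2⟩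

/-- an entry below the first row is positive (there is an earlier row-0 entry) -/
lemma pos_val_pos (hs : (a :: tl).Pairwise (· ≥ ·)) (hS : IsSYT (a :: tl) [] pos)
    {b : Fin (NN a tl)} (hb : 0 < ((pos b : ℕ × ℕ)).1) : 0 < (b : ℕ) := by
  obtain ⟨b', hlt, _⟩ := exists_row0_lt hs hS ((b : ℕ) + 1) b (by omega) hb
  have := Fin.lt_iff_val_lt_val.mp hlt
  omega

/-- characterization of maximal descent number -/
lemma Dset_eq_Bset (hS : IsSYT (a :: tl) [] pos)
    (hdes : desStat (a :: tl) [] pos = tl.sum) : Dset pos = Bset pos := by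
  apply Finset.eq_of_subset_of_card_le (Dset_subset pos)
  rw [card_Bset hS, ← hdes, desStat_eq_card]

/-- the max-descent property in usable form -/
lemma max_des_prop (hS : IsSYT (a :: tl) [] pos)
    (hdes : desStat (a :: tl) [] pos = tl.sum) :
    ∀ b : Fin (NN a tl), 0 < ((pos b : ℕ × ℕ)).1 →
      ∀ a' : Fin (NN a tl), (a' : ℕ) + 1 = (b : ℕ) →
        ((pos a' : ℕ × ℕ)).1 < ((pos b : ℕ × ℕ)).1 := by
  intro b hb a' ha'
  have hbB : b ∈ Bset pos := by simp [Bset, hb]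
  rw [← Dset_eq_Bset hS hdes, Dset, Finset.mem_filter] at hbB
  obtain ⟨-, x, hx, hlt⟩ := hbB
  have : x = a' := by apply Fin.ext; omega
  rwa [this] at hlt

/-- converse: the max-descent property implies maximal descent number -/
lemma desStat_of_max (hS : IsSYT (a :: tl) [] pos)
    (hmax : ∀ b : Fin (NN a tl), 0 < ((pos b : ℕ × ℕ)).1 →
      ∃ a' : Fin (NN a tl), (a' : ℕ) + 1 = (b : ℕ) ∧
        ((pos a' : ℕ × ℕ)).1 < ((pos b : ℕ × ℕ)).1) :
    desStat (a :: tl) [] pos = tl.sum := by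
  rw [desStat_eq_card]
  have : Dset pos = Bset pos := by
    apply Finset.Subset.antisymm (Dset_subset pos)
    intro b hb
    simp only [Bset, Finset.mem_filter, Finset.mem_univ, true_and] at hb
    simp only [Dset, Finset.mem_filter, Finset.mem_univ, true_and]
    exact hmax b hb
  rw [this, card_Bset hS]

/-- rows strictly increase along a streak of below-first-row entries -/
lemma row_chain (hS : IsSYT (a :: tl) [] pos)
    (hdes : desStat (a :: tl) [] pos = tl.sum) :
    ∀ d : ℕ, ∀ b b' : Fin (NN a tl), (b : ℕ) + d = (b' : ℕ) →
      (∀ t : Fin (NN a tl), (b : ℕ) < (t : ℕ) → (t : ℕ) ≤ (b' : ℕ) →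
        0 < ((pos t : ℕ × ℕ)).1) →
      ((pos b : ℕ × ℕ)).1 + d ≤ ((pos b' : ℕ × ℕ)).1 + 0 := by
  intro d
  induction d with
  | zero => intro b b' h _; have : b = b' := Fin.ext (by omega); rw [this]
  | succ d ih =>
    intro b b' h hall
    have hb'row : 0 < ((pos b' : ℕ × ℕ)).1 := hall b' (by omega) (le_refl _)
    have hprev : ∃ t : Fin (NN a tl), (t : ℕ) = (b : ℕ) + d := by
      refine ⟨⟨(b : ℕ) + d, ?_⟩, rfl⟩
      have := b'.isLt; omega
    obtain ⟨t, ht⟩ := hprev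
    have hstep : ((pos t : ℕ × ℕ)).1 < ((pos b' : ℕ × ℕ)).1 :=
      max_des_prop hS hdes b' hb'row t (by omega)
    rcases Nat.eq_zero_or_pos d with rfl | hd
    · have : t = b := Fin.ext (by omega)
      rw [this] at hstep; omega
    · have := ih b t (by omega) (fun s hs1 hs2 => hall s hs1 (by omega))
      omega

end SYTLemmas
section CntLemmas

variable {a : ℕ} {tl : List ℕ} {pos : Fin (NN a tl) → ↥(Cells a tl)}

lemma transposed_mem (hs : (a :: tl).Pairwise (· ≥ ·)) (p : ↥(Cells' tl)) :
    ((p : ℕ × ℕ).2 + 1, (p : ℕ × ℕ).1) ∈ Cells a tl := by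
  have hp := p.2
  have : ((p : ℕ × ℕ).1, (p : ℕ × ℕ).2) ∈ Cells' tl := by simpa using hp
  rw [mem_conj_cells hs.of_cons] at this
  rw [mem_skewCells]
  constructor
  · simpa using Nat.succ_lt_succ this.1
  · simpa using this.2

lemma bIndex_spec (hs : (a :: tl).Pairwise (· ≥ ·)) (hS : IsSYT (a :: tl) [] pos)
    (p : ↥(Cells' tl)) :
    ∃ b : Fin (NN a tl), (b : ℕ) = bIndexNat pos p ∧
      ((pos b : ℕ × ℕ)).1 = (p : ℕ × ℕ).2 + 1 ∧ ((pos b : ℕ × ℕ)).2 = (p : ℕ × ℕ).1 := by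
  have hex : ∃ b, ((pos b : ℕ × ℕ)).1 = (p : ℕ × ℕ).2 + 1 ∧
      ((pos b : ℕ × ℕ)).2 = (p : ℕ × ℕ).1 := by
    obtain ⟨b, hb⟩ := (syt_bij hS).2 ⟨_, transposed_mem hs p⟩
    exact ⟨b, by rw [hb], by rw [hb]⟩
  refine ⟨Classical.choose hex, ?_, Classical.choose_spec hex⟩
  rw [bIndexNat, dif_pos hex]

lemma cnt_mono {t t' : ℕ} (h : t ≤ t') : cntN pos t ≤ cntN pos t' := by
  apply Finset.card_le_card
  intro b hb
  simp only [Finset.mem_filter, Finset.mem_univ, true_and] at hb ⊢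
  omega

lemma cnt_le (hS : IsSYT (a :: tl) [] pos) (t : ℕ) : cntN pos t ≤ a := by
  have hcard := card_row0_cells (a := a) (tl := tl)
  rw [cntN]
  refine le_trans (Finset.card_le_card_of_injOn (fun b => (pos b : ℕ × ℕ)) ?_ ?_) hcard.le
  · intro b hb
    simp only [Finset.mem_coe, Finset.mem_filter, Finset.mem_univ, true_and] at hb
    exact Finset.mem_filter.mpr ⟨(pos b).2, hb.2⟩
  · intro b _ b' _ h
    exact hS.1 (Subtype.ext h)

lemma cnt_pos (hs : (a :: tl).Pairwise (· ≥ ·)) (hS : IsSYT (a :: tl) [] pos)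
    {b : Fin (NN a tl)} (hb : 0 < ((pos b : ℕ × ℕ)).1) : 1 ≤ cntN pos (b : ℕ) := by
  obtain ⟨b', hlt, h0⟩ := exists_row0_lt hs hS ((b : ℕ) + 1) b (by omega) hb
  rw [cntN, Nat.one_le_iff_ne_zero, ← Nat.pos_iff_ne_zero, Finset.card_pos]
  refine ⟨b', ?_⟩
  simp only [Finset.mem_filter, Finset.mem_univ, true_and]
  exact ⟨Fin.lt_iff_val_lt_val.mp hlt, h0⟩

/-- a row-0 entry's column equals the number of earlier row-0 entries -/
lemma cnt_eq_col (hS : IsSYT (a :: tl) [] pos) {b : Fin (NN a tl)}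
    (hb : ((pos b : ℕ × ℕ)).1 = 0) : cntN pos (b : ℕ) = ((pos b : ℕ × ℕ)).2 := by
  rw [cntN, ← Finset.card_range ((pos b : ℕ × ℕ)).2]
  apply Finset.card_bij (fun b' _ => ((pos b' : ℕ × ℕ)).2)
  · intro b' hb'
    simp only [Finset.mem_filter, Finset.mem_univ, true_and] at hb'
    rw [Finset.mem_range]
    rcases lt_trichotomy ((pos b' : ℕ × ℕ)).2 ((pos b : ℕ × ℕ)).2 with h | h | h
    · exact h
    · exfalso
      have : pos b' = pos b := Subtype.ext (Prod.ext (by omega) h)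
      have := hS.1 this
      omega
    · have := hS.2.1 b b' (by omega) h
      omega
  · intro b1 h1 b2 h2 heq
    simp only [Finset.mem_filter, Finset.mem_univ, true_and] at h1 h2
    exact hS.1 (Subtype.ext (Prod.ext (by omega) heq))
  · intro c hc
    rw [Finset.mem_range] at hc
    have hmem : ((0 : ℕ), c) ∈ Cells a tl := by
      have := (pos b).2
      rw [mem_skewCells] at this ⊢
      constructor
      · simp
      · have h2 := this.2
        rw [hb] at h2
        simp only at h2 ⊢
        omega
    obtain ⟨b'', hb''⟩ := (syt_bij hS).2 ⟨_, hmem⟩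
    have hrow : ((pos b'' : ℕ × ℕ)).1 = 0 := by rw [hb'']
    have hcol : ((pos b'' : ℕ × ℕ)).2 = c := by rw [hb'']
    have hlt : b'' < b := hS.2.1 b'' b (by omega) (by omega)
    refine ⟨b'', ?_, hcol⟩
    simp only [Finset.mem_filter, Finset.mem_univ, true_and]
    exact ⟨Fin.lt_iff_val_lt_val.mp hlt, hrow⟩

lemma cnt_succ_le (hS : IsSYT (a :: tl) [] pos) {b b' : Fin (NN a tl)} (h : b < b')
    (hb : ((pos b : ℕ × ℕ)).1 = 0) : cntN pos (b : ℕ) + 1 ≤ cntN pos (b' : ℕ) := by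
  rw [cntN, cntN]
  have hsub : insert b (Finset.univ.filter
      (fun x : Fin (NN a tl) => (x : ℕ) < (b : ℕ) ∧ ((pos x : ℕ × ℕ)).1 = 0)) ⊆
      Finset.univ.filter (fun x : Fin (NN a tl) => (x : ℕ) < (b' : ℕ) ∧ ((pos x : ℕ × ℕ)).1 = 0) := by
    intro x hx
    rcases Finset.mem_insert.mp hx with rfl | hx
    · simp only [Finset.mem_filter, Finset.mem_univ, true_and]
      exact ⟨Fin.lt_iff_val_lt_val.mp h, hb⟩
    · simp only [Finset.mem_filter, Finset.mem_univ, true_and] at hx ⊢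
      have := Fin.lt_iff_val_lt_val.mp h
      exact ⟨by omega, hx.2⟩
  have hnotmem : b ∉ Finset.univ.filter
      (fun x : Fin (NN a tl) => (x : ℕ) < (b : ℕ) ∧ ((pos x : ℕ × ℕ)).1 = 0) := by
    simp only [Finset.mem_filter, Finset.mem_univ, true_and, not_and]
    omega
  calc _ = (insert b (Finset.univ.filter
      (fun x : Fin (NN a tl) => (x : ℕ) < (b : ℕ) ∧ ((pos x : ℕ × ℕ)).1 = 0))).card := by
        rw [Finset.card_insert_of_notMem hnotmem]
    _ ≤ _ := Finset.card_le_card hsub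

/-- if two entries have the same count of preceding row-0 entries,
the earlier one is in a strictly higher row -/
lemma row_lt_of_cnt_eq (hS : IsSYT (a :: tl) [] pos)
    (hdes : desStat (a :: tl) [] pos = tl.sum)
    {b b' : Fin (NN a tl)} (h : b < b') (hb' : 0 < ((pos b' : ℕ × ℕ)).1)
    (hcnt : cntN pos (b : ℕ) = cntN pos (b' : ℕ)) :
    ((pos b : ℕ × ℕ)).1 < ((pos b' : ℕ × ℕ)).1 := by
  have hval := Fin.lt_iff_val_lt_val.mp h
  have claim : ∀ t : Fin (NN a tl), (b : ℕ) ≤ (t : ℕ) → (t : ℕ) < (b' : ℕ) →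
      ((pos t : ℕ × ℕ)).1 ≠ 0 := by
    intro t ht1 ht2 h0
    have h1 : cntN pos (t : ℕ) + 1 ≤ cntN pos (b' : ℕ) := cnt_succ_le hS (by omega) h0
    have h2 : cntN pos (b : ℕ) ≤ cntN pos (t : ℕ) := cnt_mono ht1
    omega
  have hall : ∀ t : Fin (NN a tl), (b : ℕ) < (t : ℕ) → (t : ℕ) ≤ (b' : ℕ) →
      0 < ((pos t : ℕ × ℕ)).1 := by
    intro t ht1 ht2
    rcases Nat.eq_or_lt_of_le ht2 with heq | hlt
    · have : t = b' := Fin.ext heq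
      rw [this]; exact hb'
    · have := claim t (by omega) (by omega); omega
  have := row_chain hS hdes ((b' : ℕ) - (b : ℕ)) b b' (by omega) hall
  omega

lemma Phi_val (ha : 0 < a) (hS : IsSYT (a :: tl) [] pos) (p : ↥(Cells' tl)) :
    (Phi ha pos p : ℕ) = cntN pos (bIndexNat pos p) - 1 := by
  rw [Phi]
  have h1 : cntN pos (bIndexNat pos p) ≤ a := cnt_le hS _
  exact Nat.mod_eq_of_lt (by omega)

end CntLemmas
section PhiMem

variable {a : ℕ} {tl : List ℕ} {pos : Fin (NN a tl) → ↥(Cells a tl)}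

lemma Phi_cond1 (ha : 0 < a) (hs : (a :: tl).Pairwise (· ≥ ·)) (hS : IsSYT (a :: tl) [] pos)
    (p q : ↥(Cells' tl)) (h1 : (p : ℕ × ℕ).1 = (q : ℕ × ℕ).1)
    (h2 : (p : ℕ × ℕ).2 ≤ (q : ℕ × ℕ).2) : Phi ha pos p ≤ Phi ha pos q := by
  obtain ⟨bp, hbp, hbpr, hbpc⟩ := bIndex_spec hs hS p
  obtain ⟨bq, hbq, hbqr, hbqc⟩ := bIndex_spec hs hS q
  rcases Nat.eq_or_lt_of_le h2 with heq | hlt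
  · have : p = q := Subtype.ext (Prod.ext h1 heq)
    rw [this]
  · have hblt : bp < bq := hS.2.2 bp bq (by omega) (by omega)
    rw [Fin.le_def, Phi_val ha hS, Phi_val ha hS, ← hbp, ← hbq]
    have := cnt_mono (pos := pos) (le_of_lt (Fin.lt_iff_val_lt_val.mp hblt))
    omega

lemma Phi_cond2 (ha : 0 < a) (hs : (a :: tl).Pairwise (· ≥ ·)) (hS : IsSYT (a :: tl) [] pos)
    (hdes : desStat (a :: tl) [] pos = tl.sum)
    (p q : ↥(Cells' tl)) (h1 : (p : ℕ × ℕ).2 = (q : ℕ × ℕ).2)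
    (h2 : (p : ℕ × ℕ).1 < (q : ℕ × ℕ).1) : Phi ha pos p < Phi ha pos q := by
  obtain ⟨bp, hbp, hbpr, hbpc⟩ := bIndex_spec hs hS p
  obtain ⟨bq, hbq, hbqr, hbqc⟩ := bIndex_spec hs hS q
  have hblt : bp < bq := hS.2.1 bp bq (by omega) (by omega)
  have hle : cntN pos (bp : ℕ) ≤ cntN pos (bq : ℕ) :=
    cnt_mono (le_of_lt (Fin.lt_iff_val_lt_val.mp hblt))
  have hne : cntN pos (bp : ℕ) ≠ cntN pos (bq : ℕ) := by
    intro heq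
    have := row_lt_of_cnt_eq hS hdes hblt (by omega) heq
    omega
  have h1p : 1 ≤ cntN pos (bp : ℕ) := cnt_pos hs hS (by omega)
  rw [Fin.lt_def, Phi_val ha hS, Phi_val ha hS, ← hbp, ← hbq]
  omega

end PhiMem

section KeyLemmas

variable {a : ℕ} {tl : List ℕ}

lemma key_arith {R L ro L' ro' : ℕ} (h1 : ro < R) (h2 : ro' < R)
    (h : L * R + ro = L' * R + ro') : L = L' ∧ ro = ro' := by
  have hR : 0 < R := by omega
  have d1 : (L * R + ro) / R = L := by
    rw [mul_comm, Nat.mul_add_div hR, Nat.div_eq_of_lt h1]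
    omega
  have d2 : (L' * R + ro') / R = L' := by
    rw [mul_comm, Nat.mul_add_div hR, Nat.div_eq_of_lt h2]
    omega
  have hL : L = L' := by rw [← d1, ← d2, h]
  constructor
  · exact hL
  · rw [hL] at h; omega

lemma keyT_row0 {T : ↥(Cells' tl) → Fin a} {c : ↥(Cells a tl)} (h : (c : ℕ × ℕ).1 = 0) :
    keyT T c = (c : ℕ × ℕ).2 * (tl.length + 1) := by
  rw [keyT, if_pos h]

lemma cell_mem_transpose (hs : (a :: tl).Pairwise (· ≥ ·)) {c : ↥(Cells a tl)}
    (h : 0 < (c : ℕ × ℕ).1) : ((c : ℕ × ℕ).2, (c : ℕ × ℕ).1 - 1) ∈ Cells' tl := by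
  have hm := c.2
  have hm' : ((c : ℕ × ℕ).1, (c : ℕ × ℕ).2) ∈ Cells a tl := by simpa using hm
  rw [mem_skewCells] at hm'
  rw [mem_conj_cells hs.of_cons]
  simp only [List.length_cons] at hm'
  constructor
  · omega
  · have := hm'.2
    have hgetd : (a :: tl).getD (c : ℕ × ℕ).1 0 = tl.getD ((c : ℕ × ℕ).1 - 1) 0 := by
      obtain ⟨i, hi⟩ : ∃ i, (c : ℕ × ℕ).1 = i + 1 := ⟨(c : ℕ × ℕ).1 - 1, by omega⟩
      rw [hi]
      simp
    omega

lemma keyT_rowpos (hs : (a :: tl).Pairwise (· ≥ ·)) {T : ↥(Cells' tl) → Fin a}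
    {c : ↥(Cells a tl)} (h : 0 < (c : ℕ × ℕ).1) :
    keyT T c = (T ⟨((c : ℕ × ℕ).2, (c : ℕ × ℕ).1 - 1), cell_mem_transpose hs h⟩ : ℕ) *
      (tl.length + 1) + (c : ℕ × ℕ).1 := by
  rw [keyT, if_neg (by omega), dif_pos (cell_mem_transpose hs h)]

lemma row_lt_R {c : ↥(Cells a tl)} : (c : ℕ × ℕ).1 < tl.length + 1 := by
  have := mem_skewCells.mp c.2
  simpa using this.1

lemma keyT_inj (hs : (a :: tl).Pairwise (· ≥ ·)) {T : ↥(Cells' tl) → Fin a}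
    (hT2 : ∀ p q : ↥(Cells' tl), ((p : ℕ × ℕ)).2 = ((q : ℕ × ℕ)).2 →
      ((p : ℕ × ℕ)).1 < ((q : ℕ × ℕ)).1 → T p < T q) :
    Function.Injective (keyT T) := by
  intro c c' hkey
  have hcR : (c : ℕ × ℕ).1 < tl.length + 1 := row_lt_R
  have hcR' : (c' : ℕ × ℕ).1 < tl.length + 1 := row_lt_R
  by_cases h0 : (c : ℕ × ℕ).1 = 0 <;> by_cases h0' : (c' : ℕ × ℕ).1 = 0
  · rw [keyT_row0 h0, keyT_row0 h0'] at hkey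
    have : (c : ℕ × ℕ).2 = (c' : ℕ × ℕ).2 :=
      Nat.eq_of_mul_eq_mul_right (by omega) hkey
    exact Subtype.ext (Prod.ext (by omega) this)
  · rw [keyT_row0 h0, keyT_rowpos hs (c := c') (by omega)] at hkey
    have := key_arith (R := tl.length + 1) (L := (c : ℕ × ℕ).2) (ro := 0)
      (by omega) hcR' (by simpa using hkey)
    omega
  · rw [keyT_rowpos hs (c := c) (by omega), keyT_row0 h0'] at hkey
    have := key_arith (R := tl.length + 1) (L' := (c' : ℕ × ℕ).2) (ro' := 0)
      hcR (by omega) (by simpa using hkey)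
    omega
  · rw [keyT_rowpos hs (c := c) (by omega), keyT_rowpos hs (c := c') (by omega)] at hkey
    obtain ⟨hL, hro⟩ := key_arith hcR hcR' hkey
    have hcoleq : (c : ℕ × ℕ).2 = (c' : ℕ × ℕ).2 := by
      by_contra hne
      rcases Nat.lt_or_ge (c : ℕ × ℕ).2 (c' : ℕ × ℕ).2 with hlt | hge
      · have := hT2 ⟨((c : ℕ × ℕ).2, (c : ℕ × ℕ).1 - 1), cell_mem_transpose hs (by omega)⟩
          ⟨((c' : ℕ × ℕ).2, (c' : ℕ × ℕ).1 - 1), cell_mem_transpose hs (by omega)⟩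
          (by simp; omega) (by simpa using hlt)
        rw [Fin.lt_def] at this
        omega
      · have hlt : (c' : ℕ × ℕ).2 < (c : ℕ × ℕ).2 := by omega
        have := hT2 ⟨((c' : ℕ × ℕ).2, (c' : ℕ × ℕ).1 - 1), cell_mem_transpose hs (by omega)⟩
          ⟨((c : ℕ × ℕ).2, (c : ℕ × ℕ).1 - 1), cell_mem_transpose hs (by omega)⟩
          (by simp; omega) (by simpa using hlt)
        rw [Fin.lt_def] at this
        omega
    exact Subtype.ext (Prod.ext (by omega) hcoleq)

end KeyLemmas
section PsiSide

variable {a : ℕ} {tl : List ℕ} {T : ↥(Cells' tl) → Fin a}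

lemma key_lt_key {R L ro L' ro' : ℕ} (h1 : ro < R) (h2 : ro' < R) :
    L * R + ro < L' * R + ro' ↔ (L < L' ∨ (L = L' ∧ ro < ro')) := by
  constructor
  · intro h
    rcases lt_trichotomy L L' with hL | heq | hL
    · exact Or.inl hL
    · exact Or.inr ⟨heq, by rw [heq] at h; omega⟩
    · exfalso
      have h3 : (L' + 1) * R ≤ L * R := mul_le_mul_left (by omega) R
      rw [add_mul, one_mul] at h3
      omega
  · intro h
    rcases h with hL | ⟨heq, hro⟩
    · have h3 : (L + 1) * R ≤ L' * R := mul_le_mul_left (by omega) R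
      rw [add_mul, one_mul] at h3
      omega
    · rw [heq]; omega

/-- every entry of a column-strict tableau is at least its (conjugate-shape) row index -/
lemma T_ge_row (hs : (a :: tl).Pairwise (· ≥ ·))
    (hT1 : ∀ p q : ↥(Cells' tl), ((p : ℕ × ℕ)).1 = ((q : ℕ × ℕ)).1 →
      ((p : ℕ × ℕ)).2 ≤ ((q : ℕ × ℕ)).2 → T p ≤ T q)
    (hT2 : ∀ p q : ↥(Cells' tl), ((p : ℕ × ℕ)).2 = ((q : ℕ × ℕ)).2 →
      ((p : ℕ × ℕ)).1 < ((q : ℕ × ℕ)).1 → T p < T q) :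
    ∀ j : ℕ, ∀ p : ↥(Cells' tl), (p : ℕ × ℕ).1 = j → j ≤ (T p : ℕ) := by
  intro j
  induction j with
  | zero => intro p _; omega
  | succ j ih =>
    intro p hp
    have hmem := p.2
    have hmem' : ((p : ℕ × ℕ).1, (p : ℕ × ℕ).2) ∈ Cells' tl := by simpa using hmem
    rw [mem_conj_cells hs.of_cons] at hmem'
    have h0 : ((j + 1 : ℕ), (0 : ℕ)) ∈ Cells' tl := by
      rw [mem_conj_cells hs.of_cons]
      have := getD_anti (hs.of_cons) (Nat.zero_le (p : ℕ × ℕ).2)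
      constructor
      · omega
      · rw [← hp]; omega
    have h1 : ((j : ℕ), (0 : ℕ)) ∈ Cells' tl := by
      rw [mem_conj_cells hs.of_cons]
      rw [mem_conj_cells hs.of_cons] at h0
      exact ⟨h0.1, by omega⟩
    have e1 : T ⟨(j, 0), h1⟩ < T ⟨(j + 1, 0), h0⟩ := hT2 _ _ rfl (by simp)
    have e2 : T ⟨(j + 1, 0), h0⟩ ≤ T p := by
      apply hT1 _ _ (by simpa using hp.symm)
      simp
    have e3 := ih ⟨(j, 0), h1⟩ rfl
    rw [Fin.lt_def] at e1
    rw [Fin.le_def] at e2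
    omega

variable (hs : (a :: tl).Pairwise (· ≥ ·))
  (hT1 : ∀ p q : ↥(Cells' tl), ((p : ℕ × ℕ)).1 = ((q : ℕ × ℕ)).1 →
      ((p : ℕ × ℕ)).2 ≤ ((q : ℕ × ℕ)).2 → T p ≤ T q)
  (hT2 : ∀ p q : ↥(Cells' tl), ((p : ℕ × ℕ)).2 = ((q : ℕ × ℕ)).2 →
      ((p : ℕ × ℕ)).1 < ((q : ℕ × ℕ)).1 → T p < T q)

include hs hT1 hT2 in
lemma psi_isSYT : IsSYT (a :: tl) [] (Psi T) := by
  have hinj := keyT_inj hs hT2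
  refine ⟨psi_inj hinj, ?_, ?_⟩
  · -- same row, columns increasing
    intro u v hrow hcol
    rw [psi_mono hinj]
    set c := Psi T u with hc
    set c' := Psi T v with hc'
    by_cases h0 : (c : ℕ × ℕ).1 = 0
    · rw [keyT_row0 h0, keyT_row0 (by omega)]
      exact (Nat.mul_lt_mul_right (by omega)).mpr hcol
    · rw [keyT_rowpos hs (c := c) (by omega), keyT_rowpos hs (c := c') (by omega)]
      rw [key_lt_key row_lt_R row_lt_R]
      left
      have := hT2 ⟨((c : ℕ × ℕ).2, (c : ℕ × ℕ).1 - 1), cell_mem_transpose hs (by omega)⟩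
        ⟨((c' : ℕ × ℕ).2, (c' : ℕ × ℕ).1 - 1), cell_mem_transpose hs (by omega)⟩
        (by simp; omega) (by simpa using hcol)
      rw [Fin.lt_def] at this
      exact this
  · -- same column, rows increasing
    intro u v hcol hrow
    rw [psi_mono hinj]
    set c := Psi T u with hc
    set c' := Psi T v with hc'
    have h0' : 0 < (c' : ℕ × ℕ).1 := by omega
    rw [keyT_rowpos hs (c := c') h0']
    by_cases h0 : (c : ℕ × ℕ).1 = 0
    · rw [keyT_row0 h0]
      have hge : (c : ℕ × ℕ).2 ≤
          (T ⟨((c' : ℕ × ℕ).2, (c' : ℕ × ℕ).1 - 1), cell_mem_transpose hs h0'⟩ : ℕ) := by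
        have := T_ge_row hs hT1 hT2 ((c' : ℕ × ℕ).2)
          ⟨((c' : ℕ × ℕ).2, (c' : ℕ × ℕ).1 - 1), cell_mem_transpose hs h0'⟩ rfl
        omega
      calc (c : ℕ × ℕ).2 * (tl.length + 1)
          ≤ (T ⟨((c' : ℕ × ℕ).2, (c' : ℕ × ℕ).1 - 1), cell_mem_transpose hs h0'⟩ : ℕ) *
            (tl.length + 1) := mul_le_mul_left hge _
        _ < _ := by omega
    · rw [keyT_rowpos hs (c := c) (by omega)]
      rw [key_lt_key row_lt_R row_lt_R]
      have hle := hT1 ⟨((c : ℕ × ℕ).2, (c : ℕ × ℕ).1 - 1), cell_mem_transpose hs (by omega)⟩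
        ⟨((c' : ℕ × ℕ).2, (c' : ℕ × ℕ).1 - 1), cell_mem_transpose hs h0'⟩
        (by simp; omega) (by simp; omega)
      rw [Fin.le_def] at hle
      rcases Nat.eq_or_lt_of_le hle with heq | hlt
      · right; exact ⟨heq, hrow⟩
      · left; exact hlt

include hs hT1 hT2 in
set_option maxHeartbeats 1000000 in
lemma psi_maxdes : desStat (a :: tl) [] (Psi T) = tl.sum := by
  have hinj := keyT_inj hs hT2
  have hS := psi_isSYT hs hT1 hT2
  apply desStat_of_max hS
  intro b hb
  obtain ⟨c, hc⟩ : ∃ x, Psi T b = x := ⟨_, rfl⟩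
  rw [hc] at hb ⊢
  have hkeyb : keyT T c =
      (T ⟨((c : ℕ × ℕ).2, (c : ℕ × ℕ).1 - 1), cell_mem_transpose hs hb⟩ : ℕ) *
        (tl.length + 1) + (c : ℕ × ℕ).1 := keyT_rowpos hs hb
  generalize hL : (T ⟨((c : ℕ × ℕ).2, (c : ℕ × ℕ).1 - 1),
    cell_mem_transpose hs hb⟩ : ℕ) = L at hkeyb
  have hLa : L < a := hL ▸ Fin.is_lt _
  have hmem : ((0 : ℕ), L) ∈ Cells a tl := by
    rw [mem_skewCells]
    refine ⟨by simp, ?_⟩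
    show L < (a :: tl).getD 0 0
    simpa using hLa
  obtain ⟨b0, hb0⟩ := psi_surj hinj ⟨_, hmem⟩
  have hkey0 : keyT T (Psi T b0) = L * (tl.length + 1) := by
    rw [hb0, keyT_row0 rfl]
  have hkc : keyT T (Psi T b) = L * (tl.length + 1) + (c : ℕ × ℕ).1 := by
    rw [hc]; exact hkeyb
  have hb0lt : b0 < b := by
    rw [psi_mono hinj, hkey0, hkc]
    omega
  have hbval := Fin.lt_iff_val_lt_val.mp hb0lt
  have hblt := b.isLt
  obtain ⟨a', ha'⟩ : ∃ x : Fin (NN a tl), (x : ℕ) = (b : ℕ) - 1 :=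
    ⟨⟨(b : ℕ) - 1, by omega⟩, rfl⟩
  refine ⟨a', by omega, ?_⟩
  have ha'lt : a' < b := by rw [Fin.lt_iff_val_lt_val]; omega
  obtain ⟨cA, hcA⟩ : ∃ x, Psi T a' = x := ⟨_, rfl⟩
  rw [hcA]
  have hk_eq : keyT T (Psi T b) = keyT T c := congrArg (keyT T) hc
  have hkA_eq : keyT T (Psi T a') = keyT T cA := congrArg (keyT T) hcA
  have hkeya' : keyT T cA < keyT T c := by
    rw [← hk_eq, ← hkA_eq]; exact (psi_mono hinj).mp ha'lt
  have hkeyb0le : keyT T (Psi T b0) ≤ keyT T cA := by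
    rw [← hkA_eq]
    rcases Nat.eq_or_lt_of_le (show (b0 : ℕ) ≤ (a' : ℕ) by omega) with heq | hlt
    · exact le_of_eq (congrArg (keyT T) (congrArg (Psi T) (Fin.ext heq)))
    · exact le_of_lt ((psi_mono hinj).mp (Fin.lt_iff_val_lt_val.mpr hlt))
  by_cases h0 : (cA : ℕ × ℕ).1 = 0
  · omega
  · have hkA : keyT T cA =
        (T ⟨((cA : ℕ × ℕ).2, (cA : ℕ × ℕ).1 - 1), cell_mem_transpose hs (by omega)⟩ : ℕ) *
          (tl.length + 1) + (cA : ℕ × ℕ).1 := keyT_rowpos hs (by omega)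
    generalize hL'' : (T ⟨((cA : ℕ × ℕ).2, (cA : ℕ × ℕ).1 - 1),
      cell_mem_transpose hs (by omega)⟩ : ℕ) = L'' at hkA
    rw [hkA, hkeyb] at hkeya'
    rw [hkey0, hkA] at hkeyb0le
    have hrA : (cA : ℕ × ℕ).1 < tl.length + 1 := row_lt_R
    have hrc : (c : ℕ × ℕ).1 < tl.length + 1 := row_lt_R
    have h1 := (key_lt_key hrA hrc).mp hkeya'
    have h2 : L ≤ L'' := by
      by_contra hcon
      have h3 : (L'' + 1) * (tl.length + 1) ≤ L * (tl.length + 1) :=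
        mul_le_mul_left (by omega) _
      rw [add_mul, one_mul] at h3
      omega
    rcases h1 with h1 | ⟨h1, h1'⟩
    · omega
    · omega

end PsiSide
section Inverses

variable {a : ℕ} {tl : List ℕ} {pos : Fin (NN a tl) → ↥(Cells a tl)}

lemma keyT_Phi_at (ha : 0 < a) (hs : (a :: tl).Pairwise (· ≥ ·))
    (hS : IsSYT (a :: tl) [] pos) {b : Fin (NN a tl)} (hb : 0 < ((pos b : ℕ × ℕ)).1) :
    keyT (Phi ha pos) (pos b) =
      (cntN pos (b : ℕ) - 1) * (tl.length + 1) + ((pos b : ℕ × ℕ)).1 := by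
  rw [keyT_rowpos hs hb, Phi_val ha hS]
  obtain ⟨b'', hval, hrow, hcol⟩ := bIndex_spec hs hS
    ⟨(((pos b : ℕ × ℕ)).2, ((pos b : ℕ × ℕ)).1 - 1), cell_mem_transpose hs hb⟩
  have hbb : b'' = b := by
    apply hS.1
    apply Subtype.ext
    apply Prod.ext
    · simp only at hrow ⊢; omega
    · simpa using hcol
  rw [← hval, hbb]

lemma key_strict (ha : 0 < a) (hs : (a :: tl).Pairwise (· ≥ ·))
    (hS : IsSYT (a :: tl) [] pos) (hdes : desStat (a :: tl) [] pos = tl.sum) :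
    StrictMono (fun b => keyT (Phi ha pos) (pos b)) := by
  intro b b' hbb
  simp only
  have hR : (0:ℕ) < tl.length + 1 := by omega
  by_cases h0 : ((pos b : ℕ × ℕ)).1 = 0 <;> by_cases h0' : ((pos b' : ℕ × ℕ)).1 = 0
  · rw [keyT_row0 h0, keyT_row0 h0']
    have hcol : ((pos b : ℕ × ℕ)).2 < ((pos b' : ℕ × ℕ)).2 := by
      rcases lt_trichotomy ((pos b : ℕ × ℕ)).2 ((pos b' : ℕ × ℕ)).2 with h | h | h
      · exact h
      · exfalso; have := hS.1 (Subtype.ext (Prod.ext (by omega) h)); omega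
      · exfalso; have := hS.2.1 b' b (by omega) h; omega
    exact (Nat.mul_lt_mul_right hR).mpr hcol
  · rw [keyT_row0 h0, keyT_Phi_at ha hs hS (by omega)]
    have hcnt : cntN pos (b : ℕ) = ((pos b : ℕ × ℕ)).2 := cnt_eq_col hS h0
    have hstep : cntN pos (b : ℕ) + 1 ≤ cntN pos (b' : ℕ) := cnt_succ_le hS hbb h0
    calc ((pos b : ℕ × ℕ)).2 * (tl.length + 1)
        ≤ (cntN pos (b' : ℕ) - 1) * (tl.length + 1) := mul_le_mul_left (by omega) _
      _ < _ := by omega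
  · rw [keyT_Phi_at ha hs hS (by omega), keyT_row0 h0']
    have hcnt' : cntN pos (b' : ℕ) = ((pos b' : ℕ × ℕ)).2 := cnt_eq_col hS h0'
    have hmono : cntN pos (b : ℕ) ≤ cntN pos (b' : ℕ) :=
      cnt_mono (le_of_lt (Fin.lt_iff_val_lt_val.mp hbb))
    have h1 : 1 ≤ cntN pos (b : ℕ) := cnt_pos hs hS (by omega)
    have hrlt : ((pos b : ℕ × ℕ)).1 < tl.length + 1 := row_lt_R
    have hcc : cntN pos (b : ℕ) - 1 + 1 = cntN pos (b : ℕ) := by omega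
    calc (cntN pos (b : ℕ) - 1) * (tl.length + 1) + ((pos b : ℕ × ℕ)).1
        < (cntN pos (b : ℕ) - 1) * (tl.length + 1) + (tl.length + 1) := by omega
      _ = (cntN pos (b : ℕ) - 1 + 1) * (tl.length + 1) := (Nat.succ_mul _ _).symm
      _ = cntN pos (b : ℕ) * (tl.length + 1) := by rw [hcc]
      _ ≤ ((pos b' : ℕ × ℕ)).2 * (tl.length + 1) := mul_le_mul_left (by omega) _
  · rw [keyT_Phi_at ha hs hS (by omega), keyT_Phi_at ha hs hS (by omega)]
    rw [key_lt_key row_lt_R row_lt_R]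
    have hmono : cntN pos (b : ℕ) ≤ cntN pos (b' : ℕ) :=
      cnt_mono (le_of_lt (Fin.lt_iff_val_lt_val.mp hbb))
    have h1 : 1 ≤ cntN pos (b : ℕ) := cnt_pos hs hS (by omega)
    rcases Nat.eq_or_lt_of_le hmono with heq | hlt
    · right
      refine ⟨by omega, ?_⟩
      exact row_lt_of_cnt_eq hS hdes hbb (by omega) heq
    · left; omega

lemma psi_phi (ha : 0 < a) (hs : (a :: tl).Pairwise (· ≥ ·))
    (hS : IsSYT (a :: tl) [] pos) (hdes : desStat (a :: tl) [] pos = tl.sum) :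
    Psi (Phi ha pos) = pos := by
  have hT2 := Phi_cond2 ha hs hS hdes
  have hinj := keyT_inj hs hT2
  apply pos_eq_of_keymono hinj (psi_surj hinj) (syt_bij hS).2
  · intro b b' hbb
    exact (psi_mono hinj).mp hbb
  · exact key_strict ha hs hS hdes

lemma phi_psi (ha : 0 < a) (hs : (a :: tl).Pairwise (· ≥ ·)) {T : ↥(Cells' tl) → Fin a}
    (hT1 : ∀ p q : ↥(Cells' tl), ((p : ℕ × ℕ)).1 = ((q : ℕ × ℕ)).1 →
      ((p : ℕ × ℕ)).2 ≤ ((q : ℕ × ℕ)).2 → T p ≤ T q)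
    (hT2 : ∀ p q : ↥(Cells' tl), ((p : ℕ × ℕ)).2 = ((q : ℕ × ℕ)).2 →
      ((p : ℕ × ℕ)).1 < ((q : ℕ × ℕ)).1 → T p < T q)
    (p : ↥(Cells' tl)) : Phi ha (Psi T) p = T p := by
  have hinj := keyT_inj hs hT2
  have hS := psi_isSYT hs hT1 hT2
  obtain ⟨bp, hval, hrow, hcol⟩ := bIndex_spec hs hS p
  apply Fin.ext
  rw [Phi_val ha hS, ← hval]
  have hb : 0 < ((Psi T bp : ℕ × ℕ)).1 := by omega
  have hq : (⟨(((Psi T bp : ℕ × ℕ)).2, ((Psi T bp : ℕ × ℕ)).1 - 1),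
      cell_mem_transpose hs hb⟩ : ↥(Cells' tl)) = p := by
    apply Subtype.ext
    apply Prod.ext
    · simpa using hcol
    · simp only at hrow ⊢; omega
  have hk : keyT T (Psi T bp) =
      (T p : ℕ) * (tl.length + 1) + ((p : ℕ × ℕ)).2 + 1 := by
    rw [keyT_rowpos hs hb, hq]
    omega
  have hcnt : cntN (Psi T) (bp : ℕ) = (T p : ℕ) + 1 := by
    rw [cntN, ← Finset.card_range ((T p : ℕ) + 1)]
    apply Finset.card_bij (fun b' _ => ((Psi T b' : ℕ × ℕ)).2)
    · intro b' hb'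
      simp only [Finset.mem_filter, Finset.mem_univ, true_and] at hb'
      rw [Finset.mem_range]
      have hklt : keyT T (Psi T b') < keyT T (Psi T bp) :=
        (psi_mono hinj).mp (Fin.lt_iff_val_lt_val.mpr hb'.1)
      rw [keyT_row0 hb'.2, hk] at hklt
      have h2 : ((p : ℕ × ℕ)).2 + 1 < tl.length + 1 := by
        have := row_lt_R (c := Psi T bp); omega
      have := (key_lt_key (L := ((Psi T b' : ℕ × ℕ)).2) (L' := (T p : ℕ))
        (ro := 0) (ro' := ((p : ℕ × ℕ)).2 + 1) (by omega) h2).mp (by omega)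
      omega
    · intro b1 h1 b2 h2 heq
      simp only [Finset.mem_filter, Finset.mem_univ, true_and] at h1 h2
      exact psi_inj hinj (Subtype.ext (Prod.ext (by omega) heq))
    · intro c'' hc''
      rw [Finset.mem_range] at hc''
      have hmem : ((0 : ℕ), c'') ∈ Cells a tl := by
        rw [mem_skewCells]
        refine ⟨by simp, ?_⟩
        show c'' < (a :: tl).getD 0 0
        have := (T p).isLt
        simpa using by omega
      obtain ⟨b'', hb''⟩ := psi_surj hinj ⟨_, hmem⟩
      have hrow'' : ((Psi T b'' : ℕ × ℕ)).1 = 0 := by rw [hb'']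
      have hcol'' : ((Psi T b'' : ℕ × ℕ)).2 = c'' := by rw [hb'']
      have hblt : b'' < bp := by
        rw [psi_mono hinj, hk, keyT_row0 hrow'']
        rw [hcol'']
        calc c'' * (tl.length + 1) ≤ (T p : ℕ) * (tl.length + 1) :=
          mul_le_mul_left (by omega) _
        _ < _ := by omega
      refine ⟨b'', ?_, hcol''⟩
      simp only [Finset.mem_filter, Finset.mem_univ, true_and]
      exact ⟨Fin.lt_iff_val_lt_val.mp hblt, hrow''⟩
  omega

end Inverses
section MajFormula

variable {a : ℕ} {tl : List ℕ} {pos : Fin (NN a tl) → ↥(Cells a tl)}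

lemma sum_rank {N k : ℕ} (s : Finset (Fin N)) (hk : s.card = k) :
    ∑ x ∈ s, (s.filter (· < x)).card = k.choose 2 := by
  set e := s.orderIsoOfFin hk with he
  have hstep : ∀ i : Fin k, (s.filter (· < (e i : Fin N))).card = (i : ℕ) := by
    intro i
    rw [← Finset.card_range (i : ℕ)]
    apply Finset.card_bij (fun y hy => (e.symm ⟨y, (Finset.mem_filter.mp hy).1⟩ : ℕ))
    · intro y hy
      rw [Finset.mem_range]
      have h1 := (Finset.mem_filter.mp hy).2
      have h2 : (e (e.symm ⟨y, (Finset.mem_filter.mp hy).1⟩) : Fin N) < (e i : Fin N) := by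
        rw [OrderIso.apply_symm_apply]
        exact h1
      exact (e.lt_iff_lt).mp (Subtype.coe_lt_coe.mp h2)
    · intro y1 h1 y2 h2 heq
      have h3 := e.symm.injective (Fin.val_injective heq)
      exact congrArg Subtype.val h3
    · intro j hj
      rw [Finset.mem_range] at hj
      have hjk : j < k := lt_trans hj i.isLt
      have hmem : (e ⟨j, hjk⟩ : Fin N) ∈ s.filter (· < (e i : Fin N)) := by
        rw [Finset.mem_filter]
        refine ⟨(e ⟨j, hjk⟩).2, ?_⟩
        have hji : (⟨j, hjk⟩ : Fin k) < i := by rw [Fin.lt_iff_val_lt_val]; exact hj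
        exact Subtype.coe_lt_coe.mpr (e.lt_iff_lt.mpr hji)
      refine ⟨(e ⟨j, hjk⟩ : Fin N), hmem, ?_⟩
      have h4 : (⟨(e ⟨j, hjk⟩ : Fin N), (Finset.mem_filter.mp hmem).1⟩ : ↥s) = e ⟨j, hjk⟩ :=
        Subtype.ext rfl
      rw [h4, OrderIso.symm_apply_apply]
  have hsum : ∑ x ∈ s, (s.filter (· < x)).card =
      ∑ i : Fin k, (s.filter (· < (e i : Fin N))).card := by
    calc ∑ x ∈ s, (s.filter (· < x)).card
        = ∑ x : ↥s, (s.filter (· < (x : Fin N))).card :=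
          (Finset.sum_coe_sort s _).symm
      _ = ∑ i : Fin k, (s.filter (· < (e i : Fin N))).card :=
          (Fintype.sum_equiv e.toEquiv (fun i => (s.filter (· < (e i : Fin N))).card)
            (fun x => (s.filter (· < (x : Fin N))).card) (fun i => rfl)).symm
  rw [hsum]
  simp only [hstep]
  rw [Fin.sum_univ_eq_sum_range (fun i => i) k, Finset.sum_range_id, Nat.choose_two_right]

lemma bIndexNat_pos_eq (hs : (a :: tl).Pairwise (· ≥ ·)) (hS : IsSYT (a :: tl) [] pos)
    {b : Fin (NN a tl)} (hb : 0 < ((pos b : ℕ × ℕ)).1) :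
    bIndexNat pos ⟨(((pos b : ℕ × ℕ)).2, ((pos b : ℕ × ℕ)).1 - 1),
      cell_mem_transpose hs hb⟩ = (b : ℕ) := by
  obtain ⟨b'', hval, hrow, hcol⟩ := bIndex_spec hs hS
    ⟨(((pos b : ℕ × ℕ)).2, ((pos b : ℕ × ℕ)).1 - 1), cell_mem_transpose hs hb⟩
  have hbb : b'' = b := by
    apply hS.1
    apply Subtype.ext
    apply Prod.ext
    · simp only at hrow ⊢; omega
    · simpa using hcol
  rw [← hval, hbb]

/-- the index of an entry equals the number of smaller indices -/
lemma val_eq_cnt_add (hS : IsSYT (a :: tl) [] pos) (b : Fin (NN a tl)) :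
    (b : ℕ) = cntN pos (b : ℕ) + ((Bset pos).filter (· < b)).card := by
  have h1 : (b : ℕ) = ((Finset.univ : Finset (Fin (NN a tl))).filter (· < b)).card := by
    rw [← Finset.card_range (b : ℕ)]
    apply (Finset.card_bij (fun y hy => ((y : Fin (NN a tl)) : ℕ)) ?_ ?_ ?_).symm
    · intro y hy
      simp only [Finset.mem_filter, Finset.mem_univ, true_and] at hy
      rw [Finset.mem_range]
      exact Fin.lt_iff_val_lt_val.mp hy
    · intro y1 _ y2 _ heq
      exact Fin.val_injective heq
    · intro j hj
      rw [Finset.mem_range] at hj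
      refine ⟨⟨j, by omega⟩, ?_, rfl⟩
      simp only [Finset.mem_filter, Finset.mem_univ, true_and]
      rw [Fin.lt_iff_val_lt_val]
      exact hj
  have h2 : (Finset.univ : Finset (Fin (NN a tl))).filter (· < b) =
      ((Finset.univ : Finset (Fin (NN a tl))).filter
        (fun b' : Fin (NN a tl) => (b' : ℕ) < (b : ℕ) ∧ ((pos b' : ℕ × ℕ)).1 = 0)) ∪
      ((Bset pos).filter (· < b)) := by
    ext x
    simp only [Finset.mem_filter, Finset.mem_univ, true_and, Finset.mem_union, Bset,
      Fin.lt_iff_val_lt_val]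
    constructor
    · intro hx
      by_cases h0 : ((pos x : ℕ × ℕ)).1 = 0
      · exact Or.inl ⟨hx, h0⟩
      · exact Or.inr ⟨by omega, hx⟩
    · rintro (⟨hx, _⟩ | ⟨_, hx⟩) <;> exact hx
  have hdisj : Disjoint
      ((Finset.univ : Finset (Fin (NN a tl))).filter
        (fun b' : Fin (NN a tl) => (b' : ℕ) < (b : ℕ) ∧ ((pos b' : ℕ × ℕ)).1 = 0))
      ((Bset pos).filter (· < b)) := by
    rw [Finset.disjoint_left]
    intro x hx1 hx2
    simp only [Finset.mem_filter, Finset.mem_univ, true_and, Bset] at hx1 hx2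
    omega
  rw [h2, Finset.card_union_of_disjoint hdisj] at h1
  rw [cntN]
  exact h1

/-- transposition map from below-first-row entries to conjugate cells is a bijection
computing the sum of the tableau entries -/
lemma sum_phi_eq (ha : 0 < a) (hs : (a :: tl).Pairwise (· ≥ ·))
    (hS : IsSYT (a :: tl) [] pos) :
    ∑ b ∈ Bset pos, (cntN pos (b : ℕ) - 1) = ∑ p : ↥(Cells' tl), (Phi ha pos p : ℕ) := by
  apply Finset.sum_bij (fun (b : Fin (NN a tl)) (hb : b ∈ Bset pos) =>
    (⟨(((pos b : ℕ × ℕ)).2, ((pos b : ℕ × ℕ)).1 - 1),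
      cell_mem_transpose hs (by simpa [Bset] using hb)⟩ : ↥(Cells' tl)))
  · intro b _; exact Finset.mem_univ _
  · intro b1 h1 b2 h2 heq
    simp only [Bset, Finset.mem_filter, Finset.mem_univ, true_and] at h1 h2
    have hv := congrArg Subtype.val heq
    simp only at hv
    apply hS.1
    apply Subtype.ext
    apply Prod.ext
    · have e1 := congrArg Prod.snd hv
      simp only at e1
      omega
    · exact congrArg Prod.fst hv
  · intro p _
    obtain ⟨bp, hval, hrow, hcol⟩ := bIndex_spec hs hS p
    have hbp : bp ∈ Bset pos := by
      simp only [Bset, Finset.mem_filter, Finset.mem_univ, true_and]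
      omega
    refine ⟨bp, hbp, ?_⟩
    apply Subtype.ext
    apply Prod.ext
    · simpa using hcol
    · simp only at hrow ⊢; omega
  · intro b hb
    simp only [Bset, Finset.mem_filter, Finset.mem_univ, true_and] at hb
    rw [Phi_val ha hS, bIndexNat_pos_eq hs hS (by simpa [Bset] using hb)]

lemma maj_formula (ha : 0 < a) (hs : (a :: tl).Pairwise (· ≥ ·))
    (hS : IsSYT (a :: tl) [] pos) (hdes : desStat (a :: tl) [] pos = tl.sum) :
    majStat (a :: tl) [] pos =
      (tl.sum + 1).choose 2 + ∑ p : ↥(Cells' tl), (Phi ha pos p : ℕ) := by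
  rw [majStat_eq_sum, Dset_eq_Bset hS hdes]
  have hsplit : ∑ b ∈ Bset pos, (b : ℕ) =
      ∑ b ∈ Bset pos, cntN pos (b : ℕ) + ∑ b ∈ Bset pos, ((Bset pos).filter (· < b)).card := by
    rw [← Finset.sum_add_distrib]
    exact Finset.sum_congr rfl (fun b _ => val_eq_cnt_add hS b)
  rw [hsplit, sum_rank (Bset pos) (card_Bset hS)]
  have hcnt1 : ∑ b ∈ Bset pos, cntN pos (b : ℕ) =
      ∑ b ∈ Bset pos, ((cntN pos (b : ℕ) - 1) + 1) := by
    apply Finset.sum_congr rfl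
    intro b hb
    simp only [Bset, Finset.mem_filter, Finset.mem_univ, true_and] at hb
    have := cnt_pos hs hS hb
    omega
  rw [hcnt1, Finset.sum_add_distrib, Finset.sum_const, card_Bset hS, smul_eq_mul, mul_one,
    sum_phi_eq ha hs hS]
  have hch : (tl.sum + 1).choose 2 = tl.sum.choose 2 + tl.sum := by
    have h := Nat.choose_succ_succ tl.sum 1
    norm_num at h
    omega
  omega

end MajFormula
/-- Let `λ = (λ_1,…,λ_r)` be a partition of `n` with `r` (positive)
parts and set `α = (λ_2,…,λ_r)`.  Then
`f_{λ, n-λ_1}(q) = q^{binom(n-λ_1+1, 2)} · s_{α'}(1, q, …, q^{λ_1-1})`. -/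
theorem stmt12 (n r : ℕ) (lam : List ℕ) (hr : 1 ≤ r) (hlen : lam.length = r)
    (hsort : List.Pairwise (· ≥ ·) lam) (hpos : ∀ x ∈ lam, 0 < x) (hsum : lam.sum = n) :
    fPoly lam (n - lam.headD 0) =
      X ^ ((n - lam.headD 0 + 1).choose 2) * schurSpec (conj lam.tail) (lam.headD 0) := by
  cases lam with
  | nil => simp at hlen; omega
  | cons a tl =>
    have ha : 0 < a := hpos a (by simp)
    have hsumc : a + tl.sum = n := by simpa using hsum
    have hhead : (a :: tl).headD 0 = a := rfl
    have htail : (a :: tl).tail = tl := rfl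
    rw [hhead, htail]
    have hk : n - a = tl.sum := by omega
    rw [hk]
    rw [fPoly, fSkew, schurSpec, Finset.mul_sum]
    refine Finset.sum_bij' (fun pos _ => Phi ha pos) (fun T _ => Psi T) ?_ ?_ ?_ ?_ ?_
    · -- hi : Phi lands in SSYTs
      intro pos hp
      rw [Finset.mem_filter] at hp
      obtain ⟨hp1, hdes⟩ := hp
      rw [SYTs, Finset.mem_filter] at hp1
      have hS := hp1.2
      rw [Finset.mem_filter]
      exact ⟨Finset.mem_univ _,
        fun p q => Phi_cond1 ha hsort hS p q,
        fun p q => Phi_cond2 ha hsort hS hdes p q⟩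
    · -- hj : Psi lands in max-descent SYTs
      intro T hT
      rw [Finset.mem_filter] at hT
      obtain ⟨-, hT1, hT2⟩ := hT
      rw [Finset.mem_filter, SYTs, Finset.mem_filter]
      exact ⟨⟨Finset.mem_univ _, psi_isSYT hsort hT1 hT2⟩, psi_maxdes hsort hT1 hT2⟩
    · -- left inverse
      intro pos hp
      rw [Finset.mem_filter] at hp
      obtain ⟨hp1, hdes⟩ := hp
      rw [SYTs, Finset.mem_filter] at hp1
      exact psi_phi ha hsort hp1.2 hdes
    · -- right inverse
      intro T hT
      rw [Finset.mem_filter] at hT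
      obtain ⟨-, hT1, hT2⟩ := hT
      funext p
      exact phi_psi ha hsort hT1 hT2 p
    · -- value equality
      intro pos hp
      rw [Finset.mem_filter] at hp
      obtain ⟨hp1, hdes⟩ := hp
      rw [SYTs, Finset.mem_filter] at hp1
      rw [← pow_add, maj_formula ha hsort hp1.2 hdes]
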